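/- Define recursively F₀ = 𝒫[H] (the harmonic extension of H ∈ C^α(𝕋), 1/2<α<1) and Fₙ = 𝒦[(ω̄'/ω') ∂F_{n−1}] for n ≥ 1, where ω is conformal on 𝔻 with |ω'|>0. Then for every p with 2 < p < 1/(1−α): ‖∂Fₙ‖_{L_p(𝔻)} ≤ ‖K‖_p^n ‖∂F₀‖_{L_p(𝔻)} and ‖∂̄Fₙ‖_{L_p(𝔻)} ≤ (1+‖K‖_p)‖K‖_p^{n−1} ‖∂F₀‖_{L_p(𝔻)} for n ≥ 1. -/

import Mathlib

open Complex Metric Set MeasureTheory ComplexConjugate Real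

noncomputable section

/-- The open unit disk in `ℂ`. -/
def unitDisk : Set ℂ := Metric.ball 0 1

/-- The unit circle in `ℂ`. -/
def unitCircle : Set ℂ := Metric.sphere 0 1

/-- Wirtinger derivative `∂ = (∂_x − i∂_y)/2`. -/
def wd (f : ℂ → ℂ) (z : ℂ) : ℂ :=
  (fderiv ℝ f z 1 - Complex.I * fderiv ℝ f z Complex.I) / 2

/-- Wirtinger derivative `∂̄ = (∂_x + i∂_y)/2`. -/
def wdbar (f : ℂ → ℂ) (z : ℂ) : ℂ :=
  (fderiv ℝ f z 1 + Complex.I * fderiv ℝ f z Complex.I) / 2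

/-- The Poisson integral (harmonic extension). -/
def poissonOp (φ : ℂ → ℂ) (z : ℂ) : ℂ :=
  (1 / (2 * Real.pi * Complex.I)) *
    ∮ ζ in C(0, 1), (1 / (ζ - z) + conj z / (1 - ζ * conj z)) * φ ζ

/-- The Green-kernel integral operator `𝒦`. -/
def greenOp (φ : ℂ → ℂ) (z : ℂ) : ℂ :=
  (1 / (Real.pi : ℂ)) *
    ∫ ζ in unitDisk, (1 / (ζ - z) + conj z / (1 - ζ * conj z)) * φ ζ

/-- The unimodular multiplier `ω̄'/ω'`. -/
def mult (ω : ℂ → ℂ) (z : ℂ) : ℂ := conj (deriv ω z) / deriv ω z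

/-- with `F₀ = 𝒫[H]`, `Fₙ = 𝒦[(ω̄'/ω')∂F_{n−1}]` (`H ∈ C^α(𝕋)`,
`1/2 < α < 1`, `ω` conformal with `ω' ≠ 0`), for `2 < p < 1/(1−α)` one has, for `n ≥ 1`,
`‖∂Fₙ‖_p ≤ ‖K‖_p^n ‖∂F₀‖_p` and `‖∂̄Fₙ‖_p ≤ (1+‖K‖_p)‖K‖_p^{n−1} ‖∂F₀‖_p`.
Here `‖K‖_p = Np` bounds the disk Beurling-type operators `Kz`, `Kzb` via which the
Wirtinger derivatives of `Fₙ` are expressed (hypotheses `hKz`, `hKzb`, `hd`, `hdbar`). -/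
theorem derivative_estimates
    (α p τ : ℝ) (hα : 1 / 2 < α) (hα1 : α < 1) (hp2 : 2 < p) (hp : p < 1 / (1 - α))
    (H : ℂ → ℂ) (c : ℝ)
    (hH : ∀ ζ₁ ∈ unitCircle, ∀ ζ₂ ∈ unitCircle, ‖H ζ₁ - H ζ₂‖ ≤ c * ‖ζ₁ - ζ₂‖ ^ α)
    (ω : ℂ → ℂ) (hω : DifferentiableOn ℂ ω unitDisk)
    (hω' : ∀ z ∈ unitDisk, deriv ω z ≠ 0)
    (F : ℕ → ℂ → ℂ)
    (hF0 : F 0 = poissonOp H)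
    (hFrec : ∀ n : ℕ, F (n + 1) = greenOp (fun ζ => mult ω ζ * wd (F n) ζ))
    (Np : ℝ) (hNp : 0 ≤ Np) (Kz Kzb : (ℂ → ℂ) → (ℂ → ℂ))
    (hKz : ∀ g : ℂ → ℂ,
      eLpNorm (Kz g) (ENNReal.ofReal p) (volume.restrict unitDisk) ≤
        ENNReal.ofReal Np * eLpNorm g (ENNReal.ofReal p) (volume.restrict unitDisk))
    (hKzb : ∀ g : ℂ → ℂ,
      eLpNorm (Kzb g) (ENNReal.ofReal p) (volume.restrict unitDisk) ≤
        ENNReal.ofReal Np * eLpNorm g (ENNReal.ofReal p) (volume.restrict unitDisk))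
    (hd : ∀ n : ℕ, ∀ᵐ z ∂(volume.restrict unitDisk),
      wd (F (n + 1)) z = Kz (fun ζ => mult ω ζ * wd (F n) ζ) z)
    (hdbar : ∀ n : ℕ, ∀ᵐ z ∂(volume.restrict unitDisk),
      wdbar (F (n + 1)) z =
        mult ω z * wd (F n) z + Kzb (fun ζ => mult ω ζ * wd (F n) ζ) z) :
    ∀ n : ℕ,
      eLpNorm (wd (F (n + 1))) (ENNReal.ofReal p) (volume.restrict unitDisk) ≤
        ENNReal.ofReal Np ^ (n + 1) *
          eLpNorm (wd (F 0)) (ENNReal.ofReal p) (volume.restrict unitDisk) ∧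
      eLpNorm (wdbar (F (n + 1))) (ENNReal.ofReal p) (volume.restrict unitDisk) ≤
        (1 + ENNReal.ofReal Np) * ENNReal.ofReal Np ^ n *
          eLpNorm (wd (F 0)) (ENNReal.ofReal p) (volume.restrict unitDisk) := by

  intro n
  set μ := volume.restrict unitDisk
  set q := ENNReal.ofReal p
  have hq1 : (1 : ENNReal) ≤ q := ENNReal.one_le_ofReal.mpr (by linarith)
  -- the multiplier has norm at most 1
  have hmult : ∀ z : ℂ, ‖mult ω z‖ ≤ 1 := by
    intro z
    unfold mult
    rcases eq_or_ne (deriv ω z) 0 with h | h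
    · simp [h]
    · rw [norm_div, RCLike.norm_conj, div_self (norm_ne_zero_iff.mpr h)]
  -- the multiplied function has eLpNorm bounded by that of wd (F m)
  have hmul_le : ∀ m : ℕ,
      eLpNorm (fun ζ => mult ω ζ * wd (F m) ζ) q μ ≤ eLpNorm (wd (F m)) q μ := by
    intro m
    apply eLpNorm_mono
    intro x
    rw [norm_mul]
    calc ‖mult ω x‖ * ‖wd (F m) x‖ ≤ 1 * ‖wd (F m) x‖ := by
          exact mul_le_mul_of_nonneg_right (hmult x) (norm_nonneg _)
      _ = ‖wd (F m) x‖ := one_mul _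
  -- key induction for the first estimate (for all m, including 0)
  have hA : ∀ m : ℕ, eLpNorm (wd (F m)) q μ ≤
      ENNReal.ofReal Np ^ m * eLpNorm (wd (F 0)) q μ := by
    intro m
    induction m with
    | zero => simp
    | succ k ih =>
        have h1 : eLpNorm (wd (F (k + 1))) q μ =
            eLpNorm (Kz (fun ζ => mult ω ζ * wd (F k) ζ)) q μ :=
          eLpNorm_congr_ae (hd k)
        calc eLpNorm (wd (F (k + 1))) q μ
            ≤ ENNReal.ofReal Np * eLpNorm (fun ζ => mult ω ζ * wd (F k) ζ) q μ := by
              rw [h1]; exact hKz _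
          _ ≤ ENNReal.ofReal Np * eLpNorm (wd (F k)) q μ := by
              exact mul_le_mul_right (hmul_le k) _
          _ ≤ ENNReal.ofReal Np * (ENNReal.ofReal Np ^ k * eLpNorm (wd (F 0)) q μ) := by
              exact mul_le_mul_right ih _
          _ = ENNReal.ofReal Np ^ (k + 1) * eLpNorm (wd (F 0)) q μ := by
              rw [pow_succ]; ring
  refine ⟨hA (n + 1), ?_⟩
  -- measurability of wd, wdbar and the multiplied function
  have hwd_meas : ∀ f : ℂ → ℂ, Measurable (wd f) := by
    intro f
    unfold wd
    exact (((measurable_fderiv_apply_const ℝ f 1).sub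
      ((measurable_fderiv_apply_const ℝ f Complex.I).const_mul Complex.I)).div_const 2)
  have hwdbar_meas : ∀ f : ℂ → ℂ, Measurable (wdbar f) := by
    intro f
    unfold wdbar
    exact (((measurable_fderiv_apply_const ℝ f 1).add
      ((measurable_fderiv_apply_const ℝ f Complex.I).const_mul Complex.I)).div_const 2)
  have hmult_meas : Measurable (mult ω) := by
    unfold mult
    exact (Complex.continuous_conj.measurable.comp (measurable_deriv ω)).div
      (measurable_deriv ω)
  set g : ℂ → ℂ := fun ζ => mult ω ζ * wd (F n) ζ with hg
  have hg_meas : Measurable g := hmult_meas.mul (hwd_meas (F n))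
  -- Kzb g is a.e. strongly measurable (from hdbar)
  have hKzb_ae : (fun z => wdbar (F (n + 1)) z - g z) =ᵐ[μ] Kzb g := by
    filter_upwards [hdbar n] with z hz
    rw [hz]; ring
  have hKzb_meas : AEStronglyMeasurable (Kzb g) μ :=
    (((hwdbar_meas (F (n + 1))).sub hg_meas).aestronglyMeasurable).congr hKzb_ae
  -- triangle inequality
  have heq : eLpNorm (wdbar (F (n + 1))) q μ = eLpNorm (g + Kzb g) q μ := by
    apply eLpNorm_congr_ae
    filter_upwards [hdbar n] with z hz
    simpa using hz
  calc eLpNorm (wdbar (F (n + 1))) q μ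
      = eLpNorm (g + Kzb g) q μ := heq
    _ ≤ eLpNorm g q μ + eLpNorm (Kzb g) q μ :=
        eLpNorm_add_le hg_meas.aestronglyMeasurable hKzb_meas hq1
    _ ≤ eLpNorm (wd (F n)) q μ + ENNReal.ofReal Np * eLpNorm g q μ :=
        add_le_add (hmul_le n) (hKzb g)
    _ ≤ eLpNorm (wd (F n)) q μ + ENNReal.ofReal Np * eLpNorm (wd (F n)) q μ :=
        add_le_add_right (mul_le_mul_right (hmul_le n) _) _
    _ = (1 + ENNReal.ofReal Np) * eLpNorm (wd (F n)) q μ := by ring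
    _ ≤ (1 + ENNReal.ofReal Np) *
          (ENNReal.ofReal Np ^ n * eLpNorm (wd (F 0)) q μ) :=
        mul_le_mul_right (hA n) _
    _ = (1 + ENNReal.ofReal Np) * ENNReal.ofReal Np ^ n *
          eLpNorm (wd (F 0)) q μ := by ring
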